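/- Assume moreover that there exist u > 0 and r₃ > 0 such that φ(z) ≥ u whenever ‖z‖ ≤ r₃, and that α_1 ≥ α_i for all i. Set p̃ = (1 − e^{−u})/(q²e^{−u} + 1 − e^{−u}), and let μ̄_ω be the probability measure on subsets of P(ω) under which each pair {x,y} ∈ P(ω) with ‖x−y‖ ≤ r₃ is included independently with probability p̃, and no pair with ‖x−y‖ > r₃ is included. Then the generalized random cluster measure μ^α_ω stochastically dominates μ̄_ω: for every function f from subsets of P(ω) to ℝ that is nondecreasing with respect to set inclusion, Σ_E f(E) μ^α_ω(E) ≥ Σ_E f(E) μ̄_ω(E). -/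

import Mathlib

open Finset
open scoped Classical

noncomputable section

namespace ContinuumPotts

/-- Points of `ℝ^d`. -/
abbrev Pt (d : ℕ) := EuclideanSpace ℝ (Fin d)

variable {d : ℕ}

/-- The vertex type attached to a finite point configuration `ω`. -/
abbrev V (ω : Finset (Pt d)) := {x : Pt d // x ∈ ω}

/-- `P(ω)`: the set of unordered pairs of distinct points of `ω`, encoded as two-element
subsets of `ω`. -/
def pairs (ω : Finset (Pt d)) : Finset (Finset (V ω)) :=
  Finset.univ.powerset.filter fun e => e.card = 2

/-- The value `φ(x−y)` attached to a pair `e = {x,y}` (for even `φ`); computed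
symmetrically so that no symmetry proof is needed in the definition. -/
def phiPair (φ : Pt d → ℝ) (ω : Finset (Pt d)) (e : Finset (V ω)) : ℝ :=
  (∑ p ∈ e.offDiag, φ (p.1.1 - p.2.1)) / 2

/-- The probability `p_e = 1 − exp(−φ(x−y))` that the pair `e = {x,y}` is an edge. -/
def pe (φ : Pt d → ℝ) (ω : Finset (Pt d)) (e : Finset (V ω)) : ℝ :=
  1 - Real.exp (-(phiPair φ ω e))

/-- The probability that the random edge set is exactly `E`: each pair `e ∈ P(ω)` is present
independently with probability `p_e`. -/
def edgeWeight (φ : Pt d → ℝ) (ω : Finset (Pt d)) (E : Finset (Finset (V ω))) : ℝ :=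
  (∏ e ∈ E, pe φ ω e) * ∏ e ∈ pairs ω \ E, (1 - pe φ ω e)

/-- The probability that the random colouring is exactly `s`: points of the boundary set `B`
get the deterministic colour `1` (here `0 : Fin q`), the other points get i.i.d. colours of
law `α`. -/
def colourWeight {q : ℕ} (α : Fin q → ℝ) (c₁ : Fin q) (ω B : Finset (Pt d))
    (s : V ω → Fin q) : ℝ :=
  if ∀ x : V ω, x.1 ∈ B → s x = c₁ then
    ∏ x ∈ Finset.univ.filter fun x : V ω => x.1 ∉ B, α (s x)
  else 0

/-- The event `A`: every pair of points forming an edge of `E` has matching colours. -/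
def Compat {q : ℕ} {ω : Finset (Pt d)} (s : V ω → Fin q) (E : Finset (Finset (V ω))) : Prop :=
  ∀ e ∈ E, ∀ x ∈ e, ∀ y ∈ e, s x = s y

/-- The Hamiltonian `H^φ(s) = Σ_{{x,y} ⊆ ω, s(x) ≠ s(y)} φ(x−y)`. -/
def Hphi {q : ℕ} (φ : Pt d → ℝ) (ω : Finset (Pt d)) (s : V ω → Fin q) : ℝ :=
  ∑ e ∈ (pairs ω).filter fun e => ¬ ∀ x ∈ e, ∀ y ∈ e, s x = s y, phiPair φ ω e

/-- Two vertices are adjacent in the edge set `E` if they are distinct and the pair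
`{x,y}` belongs to `E`. -/
def Adj {ω : Finset (Pt d)} (E : Finset (Finset (V ω))) (x y : V ω) : Prop :=
  x ≠ y ∧ ({x, y} : Finset (V ω)) ∈ E

/-- The cluster (connected component of the graph `(ω, E)`) containing `x`. -/
def clusterOf {ω : Finset (Pt d)} (E : Finset (Finset (V ω))) (x : V ω) : Finset (V ω) :=
  Finset.univ.filter fun y => Relation.ReflTransGen (Adj E) x y

/-- `C_∞(E)`: the union of all clusters of `(ω, E)` intersecting the boundary set `B`. -/
def infCluster (B : Finset (Pt d)) {ω : Finset (Pt d)} (E : Finset (Finset (V ω))) :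
    Finset (V ω) :=
  Finset.univ.filter fun x => ∃ y : V ω, y.1 ∈ B ∧ Relation.ReflTransGen (Adj E) x y

/-- The finite clusters of `(ω, E)`: those connected components not intersecting `B`. -/
def finiteClusters (B : Finset (Pt d)) {ω : Finset (Pt d)} (E : Finset (Finset (V ω))) :
    Finset (Finset (V ω)) :=
  (Finset.univ.image (clusterOf E)).filter fun C => ∀ x ∈ C, x.1 ∉ B

/-- The generalized random-cluster weight
`w(E) = α₁^{|C_∞(E)|} · ∏_{C finite cluster} (Σᵢ αᵢ^{|C|}) · ∏_{e ∈ E} p_e ·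
∏_{e ∈ P(ω)∖E} (1 − p_e)`. -/
def rcWeight {q : ℕ} (φ : Pt d → ℝ) (α : Fin q → ℝ) (c₁ : Fin q) (ω B : Finset (Pt d))
    (E : Finset (Finset (V ω))) : ℝ :=
  α c₁ ^ (infCluster B E).card * (∏ C ∈ finiteClusters B E, ∑ i, α i ^ C.card) *
    edgeWeight φ ω E


end ContinuumPotts

namespace ContinuumPotts

/-- The distance `‖x−y‖` between the two points of a pair `e = {x,y}`, computed symmetrically. -/
def pairDist {d : ℕ} {ω : Finset (Pt d)} (e : Finset (V ω)) : ℝ :=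
  (∑ p ∈ e.offDiag, dist p.1.1 p.2.1) / 2

/-- The probability that the independent edge set of the comparison model is exactly `E`:
each pair at distance at most `r₃` is present independently with probability `p̃`, and no
other pair is present. -/
def barWeight {d : ℕ} (ω : Finset (Pt d)) (r₃ ptil : ℝ) (E : Finset (Finset (V ω))) : ℝ :=
  (∏ e ∈ E, if pairDist e ≤ r₃ then ptil else 0) *
    ∏ e ∈ pairs ω \ E, (1 - if pairDist e ≤ r₃ then ptil else 0)


/-! ### Auxiliary lemmas -/

variable {d : ℕ} {ω : Finset (Pt d)}

lemma adj_symm {E : Finset (Finset (V ω))} {a b : V ω} (h : Adj E a b) : Adj E b a :=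
  ⟨h.1.symm, by rw [Finset.pair_comm]; exact h.2⟩

lemma rsymm {E : Finset (Finset (V ω))} {a b : V ω}
    (h : Relation.ReflTransGen (Adj E) a b) : Relation.ReflTransGen (Adj E) b a :=
  by
    induction h with
    | refl => exact Relation.ReflTransGen.refl
    | tail _ hbc ih => exact Relation.ReflTransGen.head (adj_symm hbc) ih

lemma mem_clusterOf {E : Finset (Finset (V ω))} {a z : V ω} :
    a ∈ clusterOf E z ↔ Relation.ReflTransGen (Adj E) z a := by
  simp [clusterOf]

lemma adj_mono {E E' : Finset (Finset (V ω))} (hEE : E ⊆ E') {a b : V ω}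
    (h : Adj E a b) : Adj E' a b := ⟨h.1, hEE h.2⟩

lemma reach_mono {E E' : Finset (Finset (V ω))} (hEE : E ⊆ E') {a b : V ω}
    (h : Relation.ReflTransGen (Adj E) a b) : Relation.ReflTransGen (Adj E') a b :=
  by
    induction h with
    | refl => exact Relation.ReflTransGen.refl
    | tail _ hbc ih => exact ih.tail (adj_mono hEE hbc)

lemma reach_insert_iff {E : Finset (Finset (V ω))} {x y : V ω} (hxy : x ≠ y)
    {a b : V ω} :
    Relation.ReflTransGen (Adj (insert {x, y} E)) a b ↔
      Relation.ReflTransGen (Adj E) a b ∨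
      (Relation.ReflTransGen (Adj E) a x ∧ Relation.ReflTransGen (Adj E) y b) ∨
      (Relation.ReflTransGen (Adj E) a y ∧ Relation.ReflTransGen (Adj E) x b) := by
  constructor
  · intro h
    induction h with
    | refl => exact Or.inl Relation.ReflTransGen.refl
    | tail _ hbc ih =>
      rename_i m c _
      have hmc : Adj E m c ∨ (m = x ∧ c = y) ∨ (m = y ∧ c = x) := by
        rcases hbc with ⟨hne, hmem⟩
        rcases Finset.mem_insert.1 hmem with h1 | h2
        · have hm : m ∈ ({x, y} : Finset (V ω)) := by rw [← h1]; simp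
          have hc : c ∈ ({x, y} : Finset (V ω)) := by rw [← h1]; simp
          simp only [Finset.mem_insert, Finset.mem_singleton] at hm hc
          rcases hm with rfl | rfl <;> rcases hc with rfl | rfl
          · exact absurd rfl hne
          · exact Or.inr (Or.inl ⟨rfl, rfl⟩)
          · exact Or.inr (Or.inr ⟨rfl, rfl⟩)
          · exact absurd rfl hne
        · exact Or.inl ⟨hne, h2⟩
      rcases hmc with hadj | ⟨hm, hc⟩ | ⟨hm, hc⟩
      · rcases ih with h1 | ⟨h1, h2⟩ | ⟨h1, h2⟩
        · exact Or.inl (h1.tail hadj)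
        · exact Or.inr (Or.inl ⟨h1, h2.tail hadj⟩)
        · exact Or.inr (Or.inr ⟨h1, h2.tail hadj⟩)
      · subst hm; subst hc
        rcases ih with h1 | ⟨h1, h2⟩ | ⟨h1, h2⟩
        · exact Or.inr (Or.inl ⟨h1, Relation.ReflTransGen.refl⟩)
        · exact Or.inr (Or.inl ⟨h1, Relation.ReflTransGen.refl⟩)
        · exact Or.inl h1
      · subst hm; subst hc
        rcases ih with h1 | ⟨h1, h2⟩ | ⟨h1, h2⟩
        · exact Or.inr (Or.inr ⟨h1, Relation.ReflTransGen.refl⟩)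
        · exact Or.inl h1
        · exact Or.inr (Or.inr ⟨h1, Relation.ReflTransGen.refl⟩)
  · intro h
    have hsub : E ⊆ insert {x, y} E := Finset.subset_insert _ _
    have hxyE : Relation.ReflTransGen (Adj (insert {x, y} E)) x y :=
      Relation.ReflTransGen.single ⟨hxy, Finset.mem_insert_self _ _⟩
    rcases h with h1 | ⟨h1, h2⟩ | ⟨h1, h2⟩
    · exact reach_mono hsub h1
    · exact ((reach_mono hsub h1).trans hxyE).trans (reach_mono hsub h2)
    · exact ((reach_mono hsub h1).trans (rsymm hxyE)).trans (reach_mono hsub h2)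


lemma self_mem_clusterOf {E : Finset (Finset (V ω))} (z : V ω) : z ∈ clusterOf E z :=
  mem_clusterOf.2 Relation.ReflTransGen.refl

lemma clusterOf_eq_of_reach {E : Finset (Finset (V ω))} {a b : V ω}
    (h : Relation.ReflTransGen (Adj E) a b) : clusterOf E a = clusterOf E b := by
  ext c; simp only [mem_clusterOf]
  exact ⟨fun hc => (rsymm h).trans hc, fun hc => h.trans hc⟩

lemma clusterOf_eq_iff {E : Finset (Finset (V ω))} {a b : V ω} :
    clusterOf E a = clusterOf E b ↔ Relation.ReflTransGen (Adj E) a b := by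
  refine ⟨fun h => ?_, clusterOf_eq_of_reach⟩
  have := self_mem_clusterOf (E := E) b
  rw [← h, mem_clusterOf] at this
  exact this

lemma mem_infCluster {B : Finset (Pt d)} {E : Finset (Finset (V ω))} {z : V ω} :
    z ∈ infCluster B E ↔ ∃ b : V ω, b.1 ∈ B ∧ Relation.ReflTransGen (Adj E) z b := by
  simp [infCluster]

section InsertEdge

variable {B : Finset (Pt d)} {E : Finset (Finset (V ω))} {x y : V ω}

/-- If `x` and `y` are already connected, adding the edge changes nothing. -/
lemma reach_insert_of_reach (hxy : x ≠ y) (hr : Relation.ReflTransGen (Adj E) x y)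
    {a b : V ω} :
    Relation.ReflTransGen (Adj (insert {x, y} E)) a b ↔ Relation.ReflTransGen (Adj E) a b := by
  rw [reach_insert_iff hxy]
  constructor
  · rintro (h | ⟨h1, h2⟩ | ⟨h1, h2⟩)
    · exact h
    · exact (h1.trans hr).trans h2
    · exact (h1.trans (rsymm hr)).trans h2
  · exact Or.inl

lemma clusterOf_insert_of_reach (hxy : x ≠ y) (hr : Relation.ReflTransGen (Adj E) x y) :
    clusterOf (insert {x, y} E) = clusterOf E := by
  funext z; ext a; simp only [mem_clusterOf, reach_insert_of_reach hxy hr]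

lemma infCluster_insert_of_reach (hxy : x ≠ y) (hr : Relation.ReflTransGen (Adj E) x y) :
    infCluster B (insert {x, y} E) = infCluster B E := by
  ext z; simp only [mem_infCluster, reach_insert_of_reach hxy hr]

variable (hxy : x ≠ y) (hnr : ¬ Relation.ReflTransGen (Adj E) x y)
include hxy hnr

lemma disjoint_cluster_xy : Disjoint (clusterOf E x) (clusterOf E y) := by
  rw [Finset.disjoint_left]
  intro a hax hay
  rw [mem_clusterOf] at hax hay
  exact hnr (hax.trans (rsymm hay))

lemma clusterOf_insert_reach_x {z : V ω} (hz : Relation.ReflTransGen (Adj E) z x) :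
    clusterOf (insert {x, y} E) z = clusterOf E x ∪ clusterOf E y := by
  ext a
  simp only [mem_clusterOf, Finset.mem_union, reach_insert_iff hxy]
  constructor
  · rintro (h | ⟨h1, h2⟩ | ⟨h1, h2⟩)
    · exact Or.inl ((rsymm hz).trans h)
    · exact Or.inr h2
    · exact absurd ((rsymm hz).trans h1) hnr
  · rintro (h | h)
    · exact Or.inl (hz.trans h)
    · exact Or.inr (Or.inl ⟨hz, h⟩)

lemma clusterOf_insert_not_reach {z : V ω} (hzx : ¬ Relation.ReflTransGen (Adj E) z x)
    (hzy : ¬ Relation.ReflTransGen (Adj E) z y) :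
    clusterOf (insert {x, y} E) z = clusterOf E z := by
  ext a
  simp only [mem_clusterOf, reach_insert_iff hxy]
  constructor
  · rintro (h | ⟨h1, h2⟩ | ⟨h1, h2⟩)
    · exact h
    · exact absurd h1 hzx
    · exact absurd h1 hzy
  · exact Or.inl

lemma image_clusterOf_insert :
    Finset.univ.image (clusterOf (insert {x, y} E)) =
      insert (clusterOf E x ∪ clusterOf E y)
        ((Finset.univ.image (clusterOf E)) \ {clusterOf E x, clusterOf E y}) := by
  ext C
  simp only [Finset.mem_insert, Finset.mem_image, Finset.mem_univ, true_and, Finset.mem_sdiff,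
    Finset.mem_singleton, not_or]
  constructor
  · rintro ⟨z, rfl⟩
    by_cases hzx : Relation.ReflTransGen (Adj E) z x
    · exact Or.inl (clusterOf_insert_reach_x hxy hnr hzx)
    by_cases hzy : Relation.ReflTransGen (Adj E) z y
    · rw [Finset.pair_comm x y] at *
      exact Or.inl ((clusterOf_insert_reach_x hxy.symm
        (fun h => hnr (rsymm h)) hzy).trans (Finset.union_comm _ _))
    · refine Or.inr ⟨⟨z, (clusterOf_insert_not_reach hxy hnr hzx hzy).symm⟩, ?_, ?_⟩
      · rw [clusterOf_insert_not_reach hxy hnr hzx hzy, clusterOf_eq_iff]; exact hzx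
      · rw [clusterOf_insert_not_reach hxy hnr hzx hzy, clusterOf_eq_iff]; exact hzy
  · rintro (rfl | ⟨⟨z, rfl⟩, hne⟩)
    · exact ⟨x, clusterOf_insert_reach_x hxy hnr Relation.ReflTransGen.refl⟩
    · rw [clusterOf_eq_iff, clusterOf_eq_iff] at hne
      refine ⟨z, clusterOf_insert_not_reach hxy hnr hne.1 hne.2⟩

lemma union_cluster_not_mem_image :
    clusterOf E x ∪ clusterOf E y ∉ Finset.univ.image (clusterOf E) := by
  intro h
  rw [Finset.mem_image] at h
  obtain ⟨z, -, hz⟩ := h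
  have hxz : x ∈ clusterOf E z := by rw [hz]; exact Finset.mem_union_left _ (self_mem_clusterOf x)
  have hyz : y ∈ clusterOf E z := by rw [hz]; exact Finset.mem_union_right _ (self_mem_clusterOf y)
  rw [mem_clusterOf] at hxz hyz
  exact hnr ((rsymm hxz).trans hyz)

end InsertEdge

lemma filter_sdiff' {β : Type*} [DecidableEq β] (s t : Finset β) (P : β → Prop)
    [DecidablePred P] : (s \ t).filter P = s.filter P \ t := by
  ext c; simp only [Finset.mem_filter, Finset.mem_sdiff]; tauto

lemma sdiff_pair {β : Type*} [DecidableEq β] (s : Finset β) (a b : β) :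
    s \ {a, b} = (s.erase a).erase b := by
  ext c
  simp only [Finset.mem_sdiff, Finset.mem_insert, Finset.mem_singleton, Finset.mem_erase, not_or]
  tauto

section InsertEdge2

variable {q : ℕ} {B : Finset (Pt d)} {E : Finset (Finset (V ω))} {x y : V ω}

variable (hxy : x ≠ y) (hnr : ¬ Relation.ReflTransGen (Adj E) x y)
include hxy hnr

lemma cluster_x_ne_cluster_y : clusterOf E x ≠ clusterOf E y := by
  rw [Ne, clusterOf_eq_iff]; exact hnr

omit hxy hnr in
lemma disjoint_infCluster_cluster_y (hpy : ∀ a ∈ clusterOf E y, a.1 ∉ B) :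
    Disjoint (infCluster B E) (clusterOf E y) := by
  rw [Finset.disjoint_right]
  intro z hzy hzinf
  rw [mem_clusterOf] at hzy
  rw [mem_infCluster] at hzinf
  obtain ⟨b, hbB, hzb⟩ := hzinf
  exact hpy b (mem_clusterOf.2 (hzy.trans hzb)) hbB

omit hnr in
lemma infCluster_insert_iff {z : V ω} :
    z ∈ infCluster B (insert {x, y} E) ↔
      (∃ b : V ω, b.1 ∈ B ∧ Relation.ReflTransGen (Adj E) z b) ∨
      (Relation.ReflTransGen (Adj E) z x ∧ ∃ b : V ω, b.1 ∈ B ∧ Relation.ReflTransGen (Adj E) y b) ∨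
      (Relation.ReflTransGen (Adj E) z y ∧ ∃ b : V ω, b.1 ∈ B ∧ Relation.ReflTransGen (Adj E) x b) := by
  rw [mem_infCluster]
  constructor
  · rintro ⟨b, hbB, hzb⟩
    rw [reach_insert_iff hxy] at hzb
    rcases hzb with h | ⟨h1, h2⟩ | ⟨h1, h2⟩
    · exact Or.inl ⟨b, hbB, h⟩
    · exact Or.inr (Or.inl ⟨h1, b, hbB, h2⟩)
    · exact Or.inr (Or.inr ⟨h1, b, hbB, h2⟩)
  · rintro (⟨b, hbB, h⟩ | ⟨h1, b, hbB, h2⟩ | ⟨h1, b, hbB, h2⟩)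
    · exact ⟨b, hbB, (reach_insert_iff hxy).2 (Or.inl h)⟩
    · exact ⟨b, hbB, (reach_insert_iff hxy).2 (Or.inr (Or.inl ⟨h1, h2⟩))⟩
    · exact ⟨b, hbB, (reach_insert_iff hxy).2 (Or.inr (Or.inr ⟨h1, h2⟩))⟩

omit hnr in
lemma not_finite_iff (hpx : ¬ ∀ a ∈ clusterOf E x, a.1 ∉ B) :
    ∃ b : V ω, b.1 ∈ B ∧ Relation.ReflTransGen (Adj E) x b := by
  push_neg at hpx
  obtain ⟨b, hb1, hb2⟩ := hpx
  exact ⟨b, hb2, mem_clusterOf.1 hb1⟩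

omit hnr in
lemma infCluster_insert_fin_fin (hpx : ∀ a ∈ clusterOf E x, a.1 ∉ B)
    (hpy : ∀ a ∈ clusterOf E y, a.1 ∉ B) :
    infCluster B (insert {x, y} E) = infCluster B E := by
  ext z
  rw [infCluster_insert_iff hxy, mem_infCluster]
  constructor
  · rintro (h | ⟨h1, b, hbB, h2⟩ | ⟨h1, b, hbB, h2⟩)
    · exact h
    · exact absurd hbB (hpy b (mem_clusterOf.2 h2))
    · exact absurd hbB (hpx b (mem_clusterOf.2 h2))
  · exact Or.inl

omit hnr in
lemma infCluster_insert_inf_x (hpx : ∃ b : V ω, b.1 ∈ B ∧ Relation.ReflTransGen (Adj E) x b)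
    (hpy : ∀ a ∈ clusterOf E y, a.1 ∉ B) :
    infCluster B (insert {x, y} E) = infCluster B E ∪ clusterOf E y := by
  ext z
  rw [infCluster_insert_iff hxy, Finset.mem_union, mem_infCluster, mem_clusterOf]
  constructor
  · rintro (h | ⟨h1, b, hbB, h2⟩ | ⟨h1, b, hbB, h2⟩)
    · exact Or.inl h
    · exact absurd hbB (hpy b (mem_clusterOf.2 h2))
    · exact Or.inr (rsymm h1)
  · rintro (⟨b, hbB, h⟩ | h)
    · exact Or.inl ⟨b, hbB, h⟩
    · exact Or.inr (Or.inr ⟨rsymm h, hpx⟩)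

omit hnr in
lemma infCluster_insert_inf_inf (hpx : ∃ b : V ω, b.1 ∈ B ∧ Relation.ReflTransGen (Adj E) x b)
    (hpy : ∃ b : V ω, b.1 ∈ B ∧ Relation.ReflTransGen (Adj E) y b) :
    infCluster B (insert {x, y} E) = infCluster B E := by
  ext z
  rw [infCluster_insert_iff hxy, mem_infCluster]
  constructor
  · rintro (h | ⟨h1, -⟩ | ⟨h1, -⟩)
    · exact h
    · obtain ⟨b, hbB, hb⟩ := hpx; exact ⟨b, hbB, h1.trans hb⟩
    · obtain ⟨b, hbB, hb⟩ := hpy; exact ⟨b, hbB, h1.trans hb⟩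
  · exact Or.inl

omit hxy hnr in
lemma cluster_x_mem_fin (hpx : ∀ a ∈ clusterOf E x, a.1 ∉ B) :
    clusterOf E x ∈ finiteClusters B E := by
  rw [finiteClusters, Finset.mem_filter]
  exact ⟨Finset.mem_image.2 ⟨x, Finset.mem_univ x, rfl⟩, hpx⟩

omit hxy hnr in
lemma cluster_x_not_mem_fin (hpx : ∃ b : V ω, b.1 ∈ B ∧ Relation.ReflTransGen (Adj E) x b) :
    clusterOf E x ∉ finiteClusters B E := by
  rw [finiteClusters, Finset.mem_filter]
  rintro ⟨-, h⟩
  obtain ⟨b, hbB, hb⟩ := hpx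
  exact h b (mem_clusterOf.2 hb) hbB

lemma finiteClusters_insert_eq :
    finiteClusters B (insert {x, y} E) =
      if (∀ a ∈ clusterOf E x ∪ clusterOf E y, a.1 ∉ B) then
        insert (clusterOf E x ∪ clusterOf E y)
          (finiteClusters B E \ {clusterOf E x, clusterOf E y})
      else finiteClusters B E \ {clusterOf E x, clusterOf E y} := by
  rw [finiteClusters, image_clusterOf_insert hxy hnr, Finset.filter_insert]
  rw [filter_sdiff']
  rfl

end InsertEdge2

/-! ### kappa -/

def kappa {q : ℕ} (α : Fin q → ℝ) (c₁ : Fin q) (B : Finset (Pt d)) {ω : Finset (Pt d)}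
    (E : Finset (Finset (V ω))) : ℝ :=
  α c₁ ^ (infCluster B E).card * ∏ C ∈ finiteClusters B E, ∑ i, α i ^ C.card

lemma rcWeight_eq_kappa_mul {q : ℕ} (φ : Pt d → ℝ) (α : Fin q → ℝ) (c₁ : Fin q)
    (ω B : Finset (Pt d)) (E : Finset (Finset (V ω))) :
    rcWeight φ α c₁ ω B E = kappa α c₁ B E * edgeWeight φ ω E := rfl

section Kappa

variable {q : ℕ} {α : Fin q → ℝ} {c₁ : Fin q} {B : Finset (Pt d)}

variable (hαpos : ∀ i, 0 < α i) (hαmax : ∀ i, α i ≤ α c₁)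
include hαpos

lemma sigma_pos (i₀ : Fin q) (k : ℕ) : 0 < ∑ i, α i ^ k :=
  Finset.sum_pos (fun i _ => pow_pos (hαpos i) k) ⟨i₀, Finset.mem_univ i₀⟩

lemma pow_le_sigma (k : ℕ) : α c₁ ^ k ≤ ∑ i, α i ^ k :=
  Finset.single_le_sum (fun i _ => (pow_pos (hαpos i) k).le) (Finset.mem_univ c₁)

include hαmax in
lemma sigma_le (k : ℕ) : (∑ i, α i ^ k) ≤ (q : ℝ) * α c₁ ^ k := by
  calc (∑ i, α i ^ k) ≤ ∑ _i : Fin q, α c₁ ^ k :=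
        Finset.sum_le_sum fun i _ => pow_le_pow_left₀ (hαpos i).le (hαmax i) k
    _ = (q : ℝ) * α c₁ ^ k := by rw [Finset.sum_const, Finset.card_univ, Fintype.card_fin,
          nsmul_eq_mul]

lemma kappa_pos {ω : Finset (Pt d)} (E : Finset (Finset (V ω))) : 0 < kappa α c₁ B E :=
  mul_pos (pow_pos (hαpos c₁) _) (Finset.prod_pos fun C _ => sigma_pos hαpos c₁ C.card)


include hαmax in
lemma kappa_insert_le_aux {ω : Finset (Pt d)} {E : Finset (Finset (V ω))} {x y : V ω}
    (hxy : x ≠ y) (hnr : ¬ Relation.ReflTransGen (Adj E) x y)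
    (hpy : ∀ a ∈ clusterOf E y, a.1 ∉ B) :
    kappa α c₁ B E ≤ (q : ℝ) ^ 2 * kappa α c₁ B (insert {x, y} E) := by
  have hq1 : (1 : ℝ) ≤ (q : ℝ) := by
    have := c₁.pos
    exact_mod_cast Nat.one_le_iff_ne_zero.2 (by omega)
  set Cx := clusterOf E x with hCxdef
  set Cy := clusterOf E y with hCydef
  have hdisj : Disjoint Cx Cy := disjoint_cluster_xy hxy hnr
  have hCne : Cx ≠ Cy := cluster_x_ne_cluster_y hxy hnr
  have hUnotI : Cx ∪ Cy ∉ Finset.univ.image (clusterOf E) := union_cluster_not_mem_image hxy hnr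
  have hUnotfc : Cx ∪ Cy ∉ finiteClusters B E \ ({Cx, Cy} : Finset (Finset (V ω))) := fun h =>
    hUnotI (Finset.mem_of_mem_filter _ ((Finset.mem_sdiff.1 h).1))
  have hCymem : Cy ∈ finiteClusters B E := cluster_x_mem_fin hpy
  have hAn : (0:ℝ) < α c₁ ^ (infCluster B E).card := pow_pos (hαpos c₁) _
  by_cases hpx : ∀ a ∈ Cx, a.1 ∉ B
  · -- both clusters finite
    have hcond : ∀ a ∈ Cx ∪ Cy, a.1 ∉ B := fun a ha =>
      (Finset.mem_union.1 ha).elim (hpx a) (hpy a)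
    have hfc : finiteClusters B (insert {x, y} E) =
        insert (Cx ∪ Cy) (finiteClusters B E \ {Cx, Cy}) := by
      rw [finiteClusters_insert_eq hxy hnr, if_pos hcond]
    have hinf : infCluster B (insert {x, y} E) = infCluster B E :=
      infCluster_insert_fin_fin hxy hpx hpy
    have hCxmem : Cx ∈ finiteClusters B E := cluster_x_mem_fin hpx
    have hCymem' : Cy ∈ (finiteClusters B E).erase Cx :=
      Finset.mem_erase.2 ⟨hCne.symm, hCymem⟩
    have hPP : (0:ℝ) < ∏ C ∈ ((finiteClusters B E).erase Cx).erase Cy, ∑ i, α i ^ C.card :=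
      Finset.prod_pos fun C _ => sigma_pos hαpos c₁ C.card
    have hprod : (∏ C ∈ finiteClusters B E, ∑ i, α i ^ C.card) =
        (∑ i, α i ^ Cx.card) * ((∑ i, α i ^ Cy.card) *
          ∏ C ∈ ((finiteClusters B E).erase Cx).erase Cy, ∑ i, α i ^ C.card) := by
      rw [← Finset.mul_prod_erase _ _ hCxmem, ← Finset.mul_prod_erase _ _ hCymem']
    have hcard : (Cx ∪ Cy).card = Cx.card + Cy.card := Finset.card_union_of_disjoint hdisj
    have hprod' : (∏ C ∈ finiteClusters B (insert {x, y} E), ∑ i, α i ^ C.card) =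
        (∑ i, α i ^ (Cx.card + Cy.card)) *
          ∏ C ∈ ((finiteClusters B E).erase Cx).erase Cy, ∑ i, α i ^ C.card := by
      rw [hfc, sdiff_pair, Finset.prod_insert (by rwa [sdiff_pair] at hUnotfc), hcard]
    have key : (∑ i, α i ^ Cx.card) * (∑ i, α i ^ Cy.card) ≤
        (q : ℝ) ^ 2 * ∑ i, α i ^ (Cx.card + Cy.card) := by
      calc (∑ i, α i ^ Cx.card) * (∑ i, α i ^ Cy.card)
          ≤ ((q : ℝ) * α c₁ ^ Cx.card) * ((q : ℝ) * α c₁ ^ Cy.card) :=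
            mul_le_mul (sigma_le hαpos hαmax _) (sigma_le hαpos hαmax _)
              (sigma_pos hαpos c₁ _).le
              (mul_nonneg (Nat.cast_nonneg q) (pow_pos (hαpos c₁) _).le)
        _ = (q : ℝ) ^ 2 * α c₁ ^ (Cx.card + Cy.card) := by rw [pow_add]; ring
        _ ≤ (q : ℝ) ^ 2 * ∑ i, α i ^ (Cx.card + Cy.card) := by
            have := pow_le_sigma hαpos (k := Cx.card + Cy.card) (c₁ := c₁)
            nlinarith
    rw [kappa, kappa, hinf, hprod, hprod']
    nlinarith [mul_le_mul_of_nonneg_left key (le_of_lt hPP), hPP, hAn]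
  · -- Cx infinite, Cy finite
    obtain ⟨b0, hb0B, hb0⟩ := not_finite_iff hxy hpx
    have hb0Cx : b0 ∈ Cx := mem_clusterOf.2 hb0
    have hcond : ¬ ∀ a ∈ Cx ∪ Cy, a.1 ∉ B := fun h =>
      h b0 (Finset.mem_union_left _ hb0Cx) hb0B
    have hCxnot : Cx ∉ finiteClusters B E := cluster_x_not_mem_fin ⟨b0, hb0B, hb0⟩
    have hfc : finiteClusters B (insert {x, y} E) = (finiteClusters B E).erase Cy := by
      rw [finiteClusters_insert_eq hxy hnr, if_neg hcond, sdiff_pair,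
        Finset.erase_eq_of_notMem hCxnot]
    have hinf : infCluster B (insert {x, y} E) = infCluster B E ∪ Cy :=
      infCluster_insert_inf_x hxy ⟨b0, hb0B, hb0⟩ hpy
    have hinfcard : (infCluster B E ∪ Cy).card = (infCluster B E).card + Cy.card :=
      Finset.card_union_of_disjoint (disjoint_infCluster_cluster_y hpy)
    have hPP : (0:ℝ) < ∏ C ∈ (finiteClusters B E).erase Cy, ∑ i, α i ^ C.card :=
      Finset.prod_pos fun C _ => sigma_pos hαpos c₁ C.card
    have hprod : (∏ C ∈ finiteClusters B E, ∑ i, α i ^ C.card) =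
        (∑ i, α i ^ Cy.card) * ∏ C ∈ (finiteClusters B E).erase Cy, ∑ i, α i ^ C.card :=
      (Finset.mul_prod_erase _ _ hCymem).symm
    have key : (∑ i, α i ^ Cy.card) ≤ (q : ℝ) ^ 2 * α c₁ ^ Cy.card := by
      have h1 := sigma_le hαpos hαmax (Cy.card)
      have h2 : (0:ℝ) < α c₁ ^ Cy.card := pow_pos (hαpos c₁) _
      have hqq : (q : ℝ) ≤ (q : ℝ) ^ 2 := by nlinarith
      exact h1.trans (mul_le_mul_of_nonneg_right hqq h2.le)
    rw [kappa, kappa, hinf, hinfcard, hfc, hprod, pow_add]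
    nlinarith [mul_le_mul_of_nonneg_left key (le_of_lt hPP), hPP, hAn,
      pow_pos (hαpos c₁) Cy.card]

include hαmax in
lemma kappa_insert_le {ω : Finset (Pt d)} {E : Finset (Finset (V ω))} {x y : V ω}
    (hxy : x ≠ y) :
    kappa α c₁ B E ≤ (q : ℝ) ^ 2 * kappa α c₁ B (insert {x, y} E) := by
  have hq1 : (1 : ℝ) ≤ (q : ℝ) := by
    have := c₁.pos
    exact_mod_cast Nat.one_le_iff_ne_zero.2 (by omega)
  have hq2 : (1 : ℝ) ≤ (q : ℝ) ^ 2 := one_le_pow₀ hq1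
  -- helper for the trivial cases
  have htriv : ∀ E' : Finset (Finset (V ω)),
      infCluster B E' = infCluster B E → finiteClusters B E' = finiteClusters B E →
      kappa α c₁ B E ≤ (q : ℝ) ^ 2 * kappa α c₁ B E' := by
    intro E' h1 h2
    have hk : kappa α c₁ B E' = kappa α c₁ B E := by unfold kappa; rw [h1, h2]
    rw [hk]
    nlinarith [kappa_pos (α := α) (c₁ := c₁) (B := B) hαpos E]
  by_cases hr : Relation.ReflTransGen (Adj E) x y
  · refine htriv _ (infCluster_insert_of_reach hxy hr) ?_
    rw [finiteClusters, clusterOf_insert_of_reach hxy hr, ← finiteClusters]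
  -- x and y in distinct clusters
  by_cases hpy : ∀ a ∈ clusterOf E y, a.1 ∉ B
  · exact kappa_insert_le_aux hαpos hαmax hxy hr hpy
  by_cases hpx : ∀ a ∈ clusterOf E x, a.1 ∉ B
  · rw [Finset.pair_comm x y]
    exact kappa_insert_le_aux hαpos hαmax hxy.symm (fun h => hr (rsymm h)) hpx
  · obtain hx := not_finite_iff hxy hpx
    obtain hy := not_finite_iff hxy.symm hpy
    refine htriv _ (infCluster_insert_inf_inf hxy hx hy) ?_
    have hcond : ¬ ∀ a ∈ clusterOf E x ∪ clusterOf E y, a.1 ∉ B := by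
      obtain ⟨b0, hb0B, hb0⟩ := hx
      exact fun h => h b0 (Finset.mem_union_left _ (mem_clusterOf.2 hb0)) hb0B
    rw [finiteClusters_insert_eq hxy hr, if_neg hcond, sdiff_pair,
      Finset.erase_eq_of_notMem (cluster_x_not_mem_fin hx),
      Finset.erase_eq_of_notMem (cluster_x_not_mem_fin hy)]

end Kappa


/-! ### Edge weights -/

lemma mem_pairs {e : Finset (V ω)} : e ∈ pairs ω ↔ e.card = 2 := by
  simp only [pairs, Finset.mem_filter, Finset.mem_powerset, Finset.subset_univ, true_and]

lemma exists_pair {e : Finset (V ω)} (he : e ∈ pairs ω) :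
    ∃ x y : V ω, x ≠ y ∧ e = {x, y} := by
  obtain ⟨x, y, hxy, h⟩ := Finset.card_eq_two.1 (mem_pairs.1 he)
  exact ⟨x, y, hxy, h⟩

lemma offDiag_pair {x y : V ω} (hxy : x ≠ y) :
    ({x, y} : Finset (V ω)).offDiag = {(x, y), (y, x)} := by
  ext ⟨a, b⟩
  simp only [Finset.mem_offDiag, Finset.mem_insert, Finset.mem_singleton, Prod.mk.injEq]
  constructor
  · rintro ⟨(rfl | rfl), (rfl | rfl), hne⟩ <;> tauto
  · rintro (⟨rfl, rfl⟩ | ⟨rfl, rfl⟩)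
    · exact ⟨Or.inl rfl, Or.inr rfl, hxy⟩
    · exact ⟨Or.inr rfl, Or.inl rfl, hxy.symm⟩

lemma phiPair_pair (φ : Pt d → ℝ) {x y : V ω} (hxy : x ≠ y) :
    phiPair φ ω {x, y} = (φ (x.1 - y.1) + φ (y.1 - x.1)) / 2 := by
  rw [phiPair, offDiag_pair hxy,
    Finset.sum_pair (show ((x, y) : V ω × V ω) ≠ (y, x) from
      fun h => hxy (congrArg Prod.fst h))]

lemma pairDist_pair {x y : V ω} (hxy : x ≠ y) :
    pairDist ({x, y} : Finset (V ω)) = dist x.1 y.1 := by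
  rw [pairDist, offDiag_pair hxy,
    Finset.sum_pair (show ((x, y) : V ω × V ω) ≠ (y, x) from
      fun h => hxy (congrArg Prod.fst h)), dist_comm]
  ring

section EdgeFacts

variable (φ : Pt d → ℝ) (hφpos : ∀ z, 0 ≤ φ z)
include hφpos

lemma phiPair_nonneg (e : Finset (V ω)) : 0 ≤ phiPair φ ω e := by
  rw [phiPair]
  have : 0 ≤ ∑ p ∈ e.offDiag, φ (p.1.1 - p.2.1) :=
    Finset.sum_nonneg fun p _ => hφpos _
  linarith

lemma pe_nonneg (e : Finset (V ω)) : 0 ≤ pe φ ω e := by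
  rw [pe, sub_nonneg, Real.exp_le_one_iff]
  linarith [phiPair_nonneg φ hφpos e]

omit hφpos in
lemma pe_lt_one (e : Finset (V ω)) : pe φ ω e < 1 := by
  rw [pe]
  linarith [Real.exp_pos (-(phiPair φ ω e))]

lemma edgeWeight_nonneg (E : Finset (Finset (V ω))) : 0 ≤ edgeWeight φ ω E :=
  mul_nonneg (Finset.prod_nonneg fun e _ => pe_nonneg φ hφpos e)
    (Finset.prod_nonneg fun e _ => by linarith [pe_lt_one (ω := ω) φ e])

lemma rcWeight_nonneg {q : ℕ} {α : Fin q → ℝ} (hαpos : ∀ i, 0 < α i) (c₁ : Fin q)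
    (B : Finset (Pt d)) (E : Finset (Finset (V ω))) : 0 ≤ rcWeight φ α c₁ ω B E := by
  rw [rcWeight_eq_kappa_mul]
  exact mul_nonneg (kappa_pos hαpos E).le (edgeWeight_nonneg φ hφpos E)

omit hφpos in
lemma edgeWeight_insert {E : Finset (Finset (V ω))} {e : Finset (V ω)}
    (he : e ∈ pairs ω) (heE : e ∉ E) :
    edgeWeight φ ω (insert e E) * (1 - pe φ ω e) = pe φ ω e * edgeWeight φ ω E := by
  have h1 : e ∈ pairs ω \ E := Finset.mem_sdiff.2 ⟨he, heE⟩
  rw [edgeWeight, edgeWeight, Finset.prod_insert heE, Finset.sdiff_insert,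
    ← Finset.mul_prod_erase _ _ h1]
  ring

end EdgeFacts

/-! ### One step of the Holley comparison -/

section Step

variable {q : ℕ} (φ : Pt d → ℝ) (α : Fin q → ℝ) (c₁ : Fin q) (B : Finset (Pt d)) (u r₃ ptil : ℝ)
variable (hφpos : ∀ z, 0 ≤ φ z) (hαpos : ∀ i, 0 < α i) (hαmax : ∀ i, α i ≤ α c₁)
variable (hu : 0 < u) (hφu : ∀ z : Pt d, ‖z‖ ≤ r₃ → u ≤ φ z)
variable (hptil : ptil = (1 - Real.exp (-u)) / ((q : ℝ) ^ 2 * Real.exp (-u) + (1 - Real.exp (-u))))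

include hu hptil

lemma ptil_pos_facts (i₀ : Fin q) :
    0 < (q : ℝ) ^ 2 * Real.exp (-u) + (1 - Real.exp (-u)) ∧ 0 < ptil ∧ ptil < 1 := by
  have hc : (0:ℝ) < Real.exp (-u) := Real.exp_pos _
  have hc1 : Real.exp (-u) < 1 := by
    rw [Real.exp_lt_one_iff]; linarith
  have hq0 : (0:ℝ) < (q : ℝ) ^ 2 := by
    have h0 := i₀.pos
    have : (1:ℝ) ≤ (q : ℝ) := by exact_mod_cast Nat.one_le_iff_ne_zero.2 (by omega)
    nlinarith
  have hD : 0 < (q : ℝ) ^ 2 * Real.exp (-u) + (1 - Real.exp (-u)) := by nlinarith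
  refine ⟨hD, ?_, ?_⟩
  · rw [hptil]
    exact div_pos (by linarith) hD
  · rw [hptil, div_lt_one hD]
    nlinarith

include hφpos hαpos hαmax hφu in
lemma rc_step {E : Finset (Finset (V ω))} {e : Finset (V ω)}
    (he : e ∈ pairs ω) (heE : e ∉ E) :
    (if pairDist e ≤ r₃ then ptil else 0) * rcWeight φ α c₁ ω B E ≤
      (1 - if pairDist e ≤ r₃ then ptil else 0) * rcWeight φ α c₁ ω B (insert e E) := by
  obtain ⟨hD, hpt0, hpt1⟩ := ptil_pos_facts u ptil hu hptil c₁
  split_ifs with hdist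
  · -- edge within range r₃
    obtain ⟨x, y, hxy, rfl⟩ := exists_pair he
    have hup : u ≤ phiPair φ ω ({x, y} : Finset (V ω)) := by
      rw [pairDist_pair hxy, dist_eq_norm] at hdist
      have h1 : u ≤ φ (x.1 - y.1) := hφu _ hdist
      have h2 : u ≤ φ (y.1 - x.1) := hφu _ (by rwa [norm_sub_rev])
      rw [phiPair_pair φ hxy]
      linarith
    set c := Real.exp (-u) with hc
    set t := Real.exp (-(phiPair φ ω ({x, y} : Finset (V ω)))) with ht
    have hc0 : 0 < c := Real.exp_pos _
    have ht0 : 0 < t := Real.exp_pos _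
    have hc1 : c < 1 := by rw [hc, Real.exp_lt_one_iff]; linarith
    have htc : t ≤ c := Real.exp_le_exp.2 (by linarith)
    set D := (q : ℝ) ^ 2 * c + (1 - c) with hDdef
    have hptv : ptil * D = 1 - c := by
      rw [hptil]
      field_simp
    have h1pt : (1 - ptil) * D = (q : ℝ) ^ 2 * c := by
      have : (1 - ptil) * D = D - ptil * D := by ring
      rw [this, hptv]
      ring
    have hpe : pe φ ω ({x, y} : Finset (V ω)) = 1 - t := by rw [pe, ht]
    have hedge : edgeWeight φ ω (insert {x, y} E) * t =
        (1 - t) * edgeWeight φ ω E := by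
      have h := edgeWeight_insert (ω := ω) φ he heE
      rw [hpe, sub_sub_cancel] at h
      exact h
    have hkap : kappa α c₁ B E ≤ (q : ℝ) ^ 2 * kappa α c₁ B (insert {x, y} E) :=
      kappa_insert_le hαpos hαmax hxy
    have hkap' : 0 < kappa α c₁ B (insert {x, y} E) := kappa_pos hαpos _
    have hedgeE : 0 ≤ edgeWeight φ ω E := edgeWeight_nonneg φ hφpos E
    have hstep1 : (1 - c) * t ≤ c * (1 - t) := by nlinarith
    have e1 : (1 - c) * t * kappa α c₁ B E ≤
        (1 - c) * t * ((q : ℝ) ^ 2 * kappa α c₁ B (insert {x, y} E)) :=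
      mul_le_mul_of_nonneg_left hkap (by nlinarith)
    have e2 : (1 - c) * t * ((q : ℝ) ^ 2 * kappa α c₁ B (insert {x, y} E)) ≤
        (c * (1 - t)) * ((q : ℝ) ^ 2 * kappa α c₁ B (insert {x, y} E)) := by
      have hq2 : (0:ℝ) ≤ (q : ℝ) ^ 2 * kappa α c₁ B (insert {x, y} E) := by positivity
      exact mul_le_mul_of_nonneg_right hstep1 hq2
    have hmain : (1 - c) * t * kappa α c₁ B E * edgeWeight φ ω E ≤
        (c * (1 - t)) * ((q : ℝ) ^ 2 * kappa α c₁ B (insert {x, y} E)) * edgeWeight φ ω E :=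
      mul_le_mul_of_nonneg_right (e1.trans e2) hedgeE
    have hDt : (0:ℝ) < D * t := by
      have : (0:ℝ) < D := hD
      positivity
    rw [rcWeight_eq_kappa_mul, rcWeight_eq_kappa_mul, ← mul_le_mul_iff_of_pos_right hDt]
    calc ptil * (kappa α c₁ B E * edgeWeight φ ω E) * (D * t)
        = (ptil * D) * (kappa α c₁ B E * edgeWeight φ ω E * t) := by ring
      _ = (1 - c) * (kappa α c₁ B E * edgeWeight φ ω E * t) := by rw [hptv]
      _ = (1 - c) * t * kappa α c₁ B E * edgeWeight φ ω E := by ring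
      _ ≤ (c * (1 - t)) * ((q : ℝ) ^ 2 * kappa α c₁ B (insert {x, y} E)) * edgeWeight φ ω E :=
          hmain
      _ = ((q : ℝ) ^ 2 * c) * (kappa α c₁ B (insert {x, y} E) * ((1 - t) * edgeWeight φ ω E)) := by
          ring
      _ = ((1 - ptil) * D) *
          (kappa α c₁ B (insert {x, y} E) * (edgeWeight φ ω (insert {x, y} E) * t)) := by
          rw [h1pt, hedge]
      _ = (1 - ptil) * (kappa α c₁ B (insert {x, y} E) * edgeWeight φ ω (insert {x, y} E)) *
          (D * t) := by ring
  · -- edge out of range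
    rw [zero_mul, sub_zero, one_mul]
    exact rcWeight_nonneg φ hφpos hαpos c₁ B _

include hφpos hαpos hαmax hφu in
lemma rc_union {E S : Finset (Finset (V ω))} (hS : S ⊆ pairs ω) (hdisj : Disjoint S E) :
    (∏ e ∈ S, if pairDist e ≤ r₃ then ptil else 0) * rcWeight φ α c₁ ω B E ≤
      (∏ e ∈ S, (1 - if pairDist e ≤ r₃ then ptil else 0)) * rcWeight φ α c₁ ω B (E ∪ S) := by
  classical
  obtain ⟨hD, hpt0, hpt1⟩ := ptil_pos_facts u ptil hu hptil c₁
  induction S using Finset.induction_on generalizing E with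
  | empty => simp
  | insert e S hnotmem ih =>
    have heP : e ∈ pairs ω := hS (Finset.mem_insert_self _ _)
    have hSP : S ⊆ pairs ω := fun a ha => hS (Finset.mem_insert_of_mem ha)
    have hdisj' : Disjoint S E := hdisj.mono_left (Finset.subset_insert _ _)
    have heE : e ∉ E ∪ S := by
      intro h
      rcases Finset.mem_union.1 h with h | h
      · exact (Finset.disjoint_left.1 hdisj (Finset.mem_insert_self _ _)) h
      · exact hnotmem h
    have hw0 : 0 ≤ (if pairDist e ≤ r₃ then ptil else 0) := by split_ifs <;> linarith
    have hw1 : 0 ≤ (1 - if pairDist e ≤ r₃ then ptil else 0) := by split_ifs <;> linarith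
    rw [Finset.prod_insert hnotmem, Finset.prod_insert hnotmem]
    have step := rc_step φ α c₁ B u r₃ ptil hφpos hαpos hαmax hu hφu hptil heP heE
    have ihh := ih hSP hdisj'
    calc (if pairDist e ≤ r₃ then ptil else 0) * (∏ e ∈ S, if pairDist e ≤ r₃ then ptil else 0) *
          rcWeight φ α c₁ ω B E
        = (if pairDist e ≤ r₃ then ptil else 0) *
          ((∏ e ∈ S, if pairDist e ≤ r₃ then ptil else 0) * rcWeight φ α c₁ ω B E) := by ring
      _ ≤ (if pairDist e ≤ r₃ then ptil else 0) *
          ((∏ e ∈ S, (1 - if pairDist e ≤ r₃ then ptil else 0)) *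
            rcWeight φ α c₁ ω B (E ∪ S)) := mul_le_mul_of_nonneg_left ihh hw0
      _ = (∏ e ∈ S, (1 - if pairDist e ≤ r₃ then ptil else 0)) *
          ((if pairDist e ≤ r₃ then ptil else 0) * rcWeight φ α c₁ ω B (E ∪ S)) := by ring
      _ ≤ (∏ e ∈ S, (1 - if pairDist e ≤ r₃ then ptil else 0)) *
          ((1 - if pairDist e ≤ r₃ then ptil else 0) * rcWeight φ α c₁ ω B (insert e (E ∪ S))) := by
          refine mul_le_mul_of_nonneg_left step ?_
          exact Finset.prod_nonneg fun a _ => by split_ifs <;> linarith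
      _ = (1 - if pairDist e ≤ r₃ then ptil else 0) *
          (∏ e ∈ S, (1 - if pairDist e ≤ r₃ then ptil else 0)) *
          rcWeight φ α c₁ ω B (E ∪ insert e S) := by
          rw [Finset.union_insert]
          ring

include hφpos hαpos hαmax hφu in
lemma bar_rc_condition {a b : Finset (Finset (V ω))} (ha : a ⊆ pairs ω) (hb : b ⊆ pairs ω) :
    barWeight ω r₃ ptil a * rcWeight φ α c₁ ω B b ≤
      barWeight ω r₃ ptil (a ∩ b) * rcWeight φ α c₁ ω B (a ∪ b) := by
  classical
  obtain ⟨hD, hpt0, hpt1⟩ := ptil_pos_facts u ptil hu hptil c₁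
  have hw0 : ∀ e : Finset (V ω), (0:ℝ) ≤ if pairDist e ≤ r₃ then ptil else 0 := fun e => by
    split_ifs <;> linarith
  have hw1 : ∀ e : Finset (V ω), (0:ℝ) ≤ 1 - if pairDist e ≤ r₃ then ptil else 0 := fun e => by
    split_ifs <;> linarith
  have hbarnn : ∀ s : Finset (Finset (V ω)), 0 ≤ barWeight ω r₃ ptil s := fun s =>
    mul_nonneg (Finset.prod_nonneg fun e _ => hw0 e) (Finset.prod_nonneg fun e _ => hw1 e)
  have hDn : (0:ℝ) < ∏ e ∈ a \ b, (1 - if pairDist e ≤ r₃ then ptil else 0) :=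
    Finset.prod_pos fun e _ => by split_ifs <;> linarith
  have hsplit1 : (∏ e ∈ a, if pairDist e ≤ r₃ then ptil else 0) =
      (∏ e ∈ a \ b, if pairDist e ≤ r₃ then ptil else 0) *
        ∏ e ∈ a ∩ b, if pairDist e ≤ r₃ then ptil else 0 := by
    rw [← Finset.prod_union (Finset.disjoint_sdiff_inter a b), Finset.sdiff_union_inter]
  have hsetsplit : pairs ω \ (a ∩ b) = (pairs ω \ a) ∪ (a \ b) := by
    ext c
    simp only [Finset.mem_sdiff, Finset.mem_union, Finset.mem_inter, not_and]
    constructor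
    · rintro ⟨hcP, hcnab⟩
      by_cases hca : c ∈ a
      · exact Or.inr ⟨hca, hcnab hca⟩
      · exact Or.inl ⟨hcP, hca⟩
    · rintro (⟨h1, h2⟩ | ⟨h1, h2⟩)
      · exact ⟨h1, fun hca => absurd hca h2⟩
      · exact ⟨ha h1, fun _ => h2⟩
  have hdisj2 : Disjoint (pairs ω \ a) (a \ b) :=
    Finset.sdiff_disjoint.mono_right Finset.sdiff_subset
  have hsplit2 : (∏ e ∈ pairs ω \ (a ∩ b), (1 - if pairDist e ≤ r₃ then ptil else 0)) =
      (∏ e ∈ pairs ω \ a, (1 - if pairDist e ≤ r₃ then ptil else 0)) *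
        ∏ e ∈ a \ b, (1 - if pairDist e ≤ r₃ then ptil else 0) := by
    rw [hsetsplit, Finset.prod_union hdisj2]
  have E1 : barWeight ω r₃ ptil a *
        (∏ e ∈ a \ b, (1 - if pairDist e ≤ r₃ then ptil else 0)) =
      barWeight ω r₃ ptil (a ∩ b) *
        ∏ e ∈ a \ b, if pairDist e ≤ r₃ then ptil else 0 := by
    rw [barWeight, barWeight, hsplit1, hsplit2]
    ring
  have hdisjS : Disjoint (a \ b) b := Finset.sdiff_disjoint
  have E2 := rc_union φ α c₁ B u r₃ ptil hφpos hαpos hαmax hu hφu hptil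
    (S := a \ b) (E := b) (fun c hc => ha (Finset.mem_sdiff.1 hc).1) hdisjS
  rw [Finset.union_sdiff_self_eq_union, Finset.union_comm b a] at E2
  refine le_of_mul_le_mul_right ?_ hDn
  calc barWeight ω r₃ ptil a * rcWeight φ α c₁ ω B b *
        ∏ e ∈ a \ b, (1 - if pairDist e ≤ r₃ then ptil else 0)
      = barWeight ω r₃ ptil (a ∩ b) *
        ((∏ e ∈ a \ b, if pairDist e ≤ r₃ then ptil else 0) * rcWeight φ α c₁ ω B b) := by
        rw [← mul_assoc, mul_right_comm, E1]
    _ ≤ barWeight ω r₃ ptil (a ∩ b) *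
        ((∏ e ∈ a \ b, (1 - if pairDist e ≤ r₃ then ptil else 0)) *
          rcWeight φ α c₁ ω B (a ∪ b)) := mul_le_mul_of_nonneg_left E2 (hbarnn _)
    _ = barWeight ω r₃ ptil (a ∩ b) * rcWeight φ α c₁ ω B (a ∪ b) *
        ∏ e ∈ a \ b, (1 - if pairDist e ≤ r₃ then ptil else 0) := by ring

lemma barWeight_nonneg (hpt0 : 0 ≤ ptil) (hpt1 : ptil ≤ 1) (s : Finset (Finset (V ω))) :
    0 ≤ barWeight ω r₃ ptil s :=
  mul_nonneg (Finset.prod_nonneg fun e _ => by split_ifs <;> linarith)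
    (Finset.prod_nonneg fun e _ => by split_ifs <;> linarith)

lemma sum_barWeight : ∑ E ∈ (pairs ω).powerset, barWeight ω r₃ ptil E = 1 := by
  classical
  have h := Finset.prod_add (fun e : Finset (V ω) => if pairDist e ≤ r₃ then ptil else 0)
    (fun e => 1 - if pairDist e ≤ r₃ then ptil else 0) (pairs ω)
  simp only [add_sub_cancel, Finset.prod_const_one] at h
  simp only [barWeight]
  exact h.symm


/-! ### Main comparison lemma -/

include hφpos hαpos hαmax hu hφu hptil in
lemma grcm_main :
    ∀ f : Finset (Finset (V ω)) → ℝ,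
      (∀ E E' : Finset (Finset (V ω)), E ⊆ E' → f E ≤ f E') →
      (∑ E ∈ (pairs ω).powerset, f E * barWeight ω r₃ ptil E)
        ≤ ∑ E ∈ (pairs ω).powerset,
            f E * (rcWeight φ α c₁ ω B E /
              ∑ E' ∈ (pairs ω).powerset, rcWeight φ α c₁ ω B E') := by
  intro f hmono
  classical
  obtain ⟨hD, hpt0, hpt1⟩ := ptil_pos_facts u ptil hu hptil c₁
  set Z := ∑ E' ∈ (pairs ω).powerset, rcWeight φ α c₁ ω B E' with hZ
  have hZpos : 0 < Z := by
    refine Finset.sum_pos' (fun E _ => rcWeight_nonneg φ hφpos hαpos c₁ B E)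
      ⟨∅, Finset.mem_powerset.2 (Finset.empty_subset _), ?_⟩
    rw [rcWeight_eq_kappa_mul]
    refine mul_pos (kappa_pos hαpos _) ?_
    rw [edgeWeight, Finset.prod_empty, one_mul, Finset.sdiff_empty]
    exact Finset.prod_pos fun e _ => by linarith [pe_lt_one (ω := ω) φ e]
  set F : Finset (Finset (V ω)) → ℝ :=
    fun a => if a ⊆ pairs ω then barWeight ω r₃ ptil a else 0 with hF
  set G : Finset (Finset (V ω)) → ℝ :=
    fun a => if a ⊆ pairs ω then rcWeight φ α c₁ ω B a / Z else 0 with hG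
  have hpowfilter : (pairs ω).powerset =
      Finset.univ.filter (fun a : Finset (Finset (V ω)) => a ⊆ pairs ω) := by
    ext a; simp
  have hconv : ∀ v : Finset (Finset (V ω)) → ℝ,
      (∑ a : Finset (Finset (V ω)), (if a ⊆ pairs ω then v a else 0))
        = ∑ E ∈ (pairs ω).powerset, v E := by
    intro v
    rw [hpowfilter, Finset.sum_filter]
  have hFsum : ∑ a, F a = 1 := by
    rw [hF]
    exact (hconv _).trans (sum_barWeight u r₃ ptil hu hptil)
  have hGsum : ∑ a, G a = 1 := by
    rw [hG]
    rw [hconv (fun a => rcWeight φ α c₁ ω B a / Z), ← Finset.sum_div, ← hZ,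
      div_self hZpos.ne']
  have hμ0 : (0 : Finset (Finset (V ω)) → ℝ) ≤ fun a => f a - f ∅ := fun a =>
    sub_nonneg.2 (hmono ∅ a (Finset.empty_subset a))
  have hμmono : Monotone (fun a : Finset (Finset (V ω)) => f a - f ∅) := fun a b hab =>
    sub_le_sub_right (hmono a b hab) _
  have hF0 : (0 : Finset (Finset (V ω)) → ℝ) ≤ F := fun a => by
    rw [hF]; dsimp only
    split_ifs
    · exact barWeight_nonneg u r₃ ptil hu hptil hpt0.le hpt1.le a
    · exact le_refl 0
  have hG0 : (0 : Finset (Finset (V ω)) → ℝ) ≤ G := fun a => by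
    rw [hG]; dsimp only
    split_ifs
    · exact div_nonneg (rcWeight_nonneg φ hφpos hαpos c₁ B a) hZpos.le
    · exact le_refl 0
  have hcond : ∀ a b : Finset (Finset (V ω)), F a * G b ≤ F (a ⊓ b) * G (a ⊔ b) := by
    intro a b
    by_cases hain : a ⊆ pairs ω
    · by_cases hbin : b ⊆ pairs ω
      · have hiin : a ⊓ b ⊆ pairs ω := (Finset.inter_subset_left).trans hain
        have huin : a ⊔ b ⊆ pairs ω := Finset.union_subset hain hbin
        rw [hF, hG]; dsimp only
        rw [if_pos hain, if_pos hbin, if_pos hiin, if_pos huin]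
        have core := bar_rc_condition φ α c₁ B u r₃ ptil hφpos hαpos hαmax hu hφu hptil
          hain hbin
        calc barWeight ω r₃ ptil a * (rcWeight φ α c₁ ω B b / Z)
            = (barWeight ω r₃ ptil a * rcWeight φ α c₁ ω B b) / Z := by ring
          _ ≤ (barWeight ω r₃ ptil (a ∩ b) * rcWeight φ α c₁ ω B (a ∪ b)) / Z :=
              (div_le_div_iff_of_pos_right hZpos).2 core
          _ = barWeight ω r₃ ptil (a ⊓ b) * (rcWeight φ α c₁ ω B (a ⊔ b) / Z) := by
              rw [Finset.inf_eq_inter, Finset.sup_eq_union]; ring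
      · have : G b = 0 := by rw [hG]; dsimp only; rw [if_neg hbin]
        rw [this, mul_zero]
        exact mul_nonneg (hF0 _) (hG0 _)
    · have : F a = 0 := by rw [hF]; dsimp only; rw [if_neg hain]
      rw [this, zero_mul]
      exact mul_nonneg (hF0 _) (hG0 _)
  have key := holley (μ := fun a : Finset (Finset (V ω)) => f a - f ∅) (f := F) (g := G)
    hμ0 hF0 hG0 hμmono (hFsum.trans hGsum.symm) hcond
  have expand : ∀ dens : Finset (Finset (V ω)) → ℝ,
      ∑ a, (f a - f ∅) * dens a = (∑ a, f a * dens a) - f ∅ * ∑ a, dens a := by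
    intro dens
    rw [Finset.mul_sum, ← Finset.sum_sub_distrib]
    exact Finset.sum_congr rfl fun a _ => by ring
  rw [expand F, expand G, hFsum, hGsum] at key
  have hFc : ∑ a, f a * F a = ∑ E ∈ (pairs ω).powerset, f E * barWeight ω r₃ ptil E := by
    rw [hF]; simp only [mul_ite, mul_zero]
    exact hconv _
  have hGc : ∑ a, f a * G a =
      ∑ E ∈ (pairs ω).powerset, f E * (rcWeight φ α c₁ ω B E / Z) := by
    rw [hG]; simp only [mul_ite, mul_zero]
    exact hconv _
  rw [hFc, hGc] at key
  linarith

end Step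

/-- If `φ ≥ u > 0` on the ball of radius `r₃` and `α₁` is maximal, then the
generalized random cluster measure `μ^α_ω` stochastically dominates the independent edge model
`μ̄_ω` with edge probability `p̃ = (1−e^{−u})/(q²e^{−u}+1−e^{−u})`: the expectation of any
nondecreasing function of the edge set is at least as large under `μ^α_ω` as under `μ̄_ω`. -/
theorem grcm_dominates_bernoulli (d q : ℕ) (hd : 1 ≤ d) (hq : 2 ≤ q)
    (ω B : Finset (Pt d)) (hB : B ⊆ ω) (φ : Pt d → ℝ)
    (hφeven : ∀ z, φ (-z) = φ z) (hφpos : ∀ z, 0 ≤ φ z)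
    (α : Fin q → ℝ) (hαpos : ∀ i, 0 < α i) (hαsum : ∑ i, α i = 1)
    (u r₃ : ℝ) (hu : 0 < u) (hr₃ : 0 < r₃)
    (hφu : ∀ z : Pt d, ‖z‖ ≤ r₃ → u ≤ φ z)
    (hαmax : ∀ i, α i ≤ α (⟨0, by omega⟩ : Fin q)) :
    ∀ f : Finset (Finset (V ω)) → ℝ,
      (∀ E E' : Finset (Finset (V ω)), E ⊆ E' → f E ≤ f E') →
      (∑ E ∈ (pairs ω).powerset,
          f E * barWeight ω r₃
            ((1 - Real.exp (-u)) / ((q : ℝ) ^ 2 * Real.exp (-u) + (1 - Real.exp (-u)))) E)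
        ≤ ∑ E ∈ (pairs ω).powerset,
            f E * (rcWeight φ α (⟨0, by omega⟩ : Fin q) ω B E /
              ∑ E' ∈ (pairs ω).powerset, rcWeight φ α (⟨0, by omega⟩ : Fin q) ω B E') :=
  grcm_main φ α ⟨0, by omega⟩ B u r₃ _ hφpos hαpos hαmax hu hφu rfl

end ContinuumPotts
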